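/- For every real E > n/2 with n a positive integer, ∑_{k ∈ ℕ, k < E − n/2} C(k+n−1, k) < (1/n!)·(E + 1/2)^n. -/

import Mathlib

open Finset

lemma hockey (m : ℕ) : ∀ K : ℕ, ∑ k ∈ Finset.range K, (k + m).choose k = (K + m).choose (m + 1) := by
  intro K
  induction K with
  | zero => simp [Nat.choose_eq_zero_of_lt (Nat.lt_succ_self m)]
  | succ K ih =>
    rw [Finset.sum_range_succ, ih]
    have hsymm : (K + m).choose K = (K + m).choose m := by
      have := Nat.choose_symm (Nat.le_add_right K m)
      simpa using this.symm
    have : (K + 1 + m) = (K + m) + 1 := by ring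
    rw [this, Nat.choose_succ_succ, hsymm]
    ring

lemma asc_cast (K : ℕ) : ∀ n : ℕ, (K.ascFactorial n : ℝ) = ∏ i ∈ Finset.range n, ((K : ℝ) + i) := by
  intro n
  induction n with
  | zero => simp
  | succ n ih =>
    rw [Nat.ascFactorial_succ, Finset.prod_range_succ, ← ih]
    push_cast
    ring

lemma prod_le_pow (K : ℕ) (n : ℕ) :
    (∏ i ∈ Finset.range n, ((K : ℝ) + i)) ≤ ((K : ℝ) + ((n : ℝ) - 1) / 2) ^ n := by
  set c : ℝ := (K : ℝ) + ((n : ℝ) - 1) / 2 with hc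
  rcases Nat.eq_zero_or_pos n with rfl | hn
  · simp
  have hcn : (0 : ℝ) ≤ c := by
    have h1 : (1 : ℝ) ≤ (n : ℝ) := by exact_mod_cast hn
    have : (0 : ℝ) ≤ (K : ℝ) := Nat.cast_nonneg K
    rw [hc]; linarith
  have hP : (0 : ℝ) ≤ ∏ i ∈ Finset.range n, ((K : ℝ) + i) := by
    apply Finset.prod_nonneg
    intro i _
    positivity
  have hrefl : (∏ i ∈ Finset.range n, ((K : ℝ) + i))
      = ∏ i ∈ Finset.range n, ((K : ℝ) + ((n : ℕ) - 1 - i : ℕ)) := by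
    exact (Finset.prod_range_reflect (fun i => (K : ℝ) + i) n).symm
  have hsq : (∏ i ∈ Finset.range n, ((K : ℝ) + i)) ^ 2 ≤ (c ^ n) ^ 2 := by
    have : (∏ i ∈ Finset.range n, ((K : ℝ) + i)) ^ 2
        = ∏ i ∈ Finset.range n, (((K : ℝ) + i) * ((K : ℝ) + ((n : ℕ) - 1 - i : ℕ))) := by
      rw [Finset.prod_mul_distrib, ← hrefl]; ring
    rw [this]
    have : (c ^ n) ^ 2 = ∏ _i ∈ Finset.range n, c ^ 2 := by
      rw [Finset.prod_const, Finset.card_range, ← pow_mul, ← pow_mul]; ring_nf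
    rw [this]
    apply Finset.prod_le_prod
    · intro i hi
      have : (0 : ℝ) ≤ (K : ℝ) := Nat.cast_nonneg K
      positivity
    · intro i hi
      have hi' : i < n := Finset.mem_range.mp hi
      have hcast : ((n - 1 - i : ℕ) : ℝ) = (n : ℝ) - 1 - i := by
        have h1 : i ≤ n - 1 := by omega
        have h2 : 1 ≤ n := hn
        push_cast [Nat.cast_sub h1, Nat.cast_sub h2]
        ring
      rw [hcast, hc]
      nlinarith [sq_nonneg (2 * (i : ℝ) - ((n : ℝ) - 1))]
  exact le_of_pow_le_pow_left₀ two_ne_zero (by positivity) hsq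

theorem binom_sum_lt (n : ℕ) (hn : 0 < n) (E : ℝ) (hE : (n : ℝ) / 2 < E) :
    (∑ k ∈ Finset.range ⌈E - (n : ℝ) / 2⌉₊, ((k + n - 1).choose k : ℝ)) <
      (1 / (n.factorial : ℝ)) * (E + 1 / 2) ^ n := by
  obtain ⟨m, rfl⟩ : ∃ m, n = m + 1 := ⟨n - 1, by omega⟩
  set K := ⌈E - ((m + 1 : ℕ) : ℝ) / 2⌉₊ with hK
  have hsum : (∑ k ∈ Finset.range K, ((k + (m + 1) - 1).choose k : ℝ))
      = ((K + m).choose (m + 1) : ℝ) := by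
    rw [← hockey m K]
    push_cast
    apply Finset.sum_congr rfl
    intro k _
    have h : k + (m + 1) - 1 = k + m := by omega
    rw [h]
  rw [hsum]
  -- choose = ascFactorial / factorial
  have hfac : (K.ascFactorial (m + 1) : ℝ) = ((m + 1).factorial : ℝ) * ((K + m).choose (m + 1) : ℝ) := by
    have := Nat.ascFactorial_eq_factorial_mul_choose' K (m + 1)
    have h2 : K + (m + 1) - 1 = K + m := by omega
    rw [h2] at this
    exact_mod_cast congrArg (Nat.cast : ℕ → ℝ) this
  have hfacpos : (0 : ℝ) < ((m + 1).factorial : ℝ) := by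
    exact_mod_cast (m + 1).factorial_pos
  have hchoose : ((K + m).choose (m + 1) : ℝ) = (K.ascFactorial (m + 1) : ℝ) / ((m + 1).factorial : ℝ) := by
    field_simp [hfac]
    rw [hfac]; ring
  rw [hchoose, asc_cast]
  set c : ℝ := (K : ℝ) + (((m + 1 : ℕ) : ℝ) - 1) / 2 with hc
  have hprod : (∏ i ∈ Finset.range (m + 1), ((K : ℝ) + i)) ≤ c ^ (m + 1) :=
    prod_le_pow K (m + 1)
  have hcE : c < E + 1 / 2 := by
    have h0 : (0 : ℝ) ≤ E - ((m + 1 : ℕ) : ℝ) / 2 := le_of_lt (by linarith)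
    have hceil : (K : ℝ) < E - ((m + 1 : ℕ) : ℝ) / 2 + 1 := Nat.ceil_lt_add_one h0
    rw [hc]
    push_cast at hceil ⊢
    linarith
  have hc0 : (0 : ℝ) ≤ c := by
    have h1 : (0 : ℝ) ≤ (K : ℝ) := Nat.cast_nonneg K
    have h2 : (0 : ℝ) ≤ (m : ℝ) := Nat.cast_nonneg m
    rw [hc]; push_cast; linarith
  have hpow : c ^ (m + 1) < (E + 1 / 2) ^ (m + 1) :=
    pow_lt_pow_left₀ hcE hc0 (Nat.succ_ne_zero m)
  calc (∏ i ∈ Finset.range (m + 1), ((K : ℝ) + i)) / ((m + 1).factorial : ℝ)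
      ≤ c ^ (m + 1) / ((m + 1).factorial : ℝ) := by gcongr
    _ < (E + 1 / 2) ^ (m + 1) / ((m + 1).factorial : ℝ) := by gcongr
    _ = 1 / ((m + 1).factorial : ℝ) * (E + 1 / 2) ^ (m + 1) := by ring
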